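/- Let ℓ_i, ℓ_j, ℓ_k, ℓ_l be non-vertical, non-horizontal lines in ℝ², viewed as invertible affine maps ℝ → ℝ. If ℓ_i ∘ ℓ_j^{-1} = ℓ_k ∘ ℓ_l^{-1} and ℓ_j^{-1} ∘ ℓ_i = ℓ_l^{-1} ∘ ℓ_k as affine maps, and ℓ_i and ℓ_j intersect at a point (u,v), then ℓ_k and ℓ_l also both pass through (u,v); in particular all four lines are concurrent. -/
import Mathlib


/-- If `ℓᵢ ∘ ℓⱼ⁻¹ = ℓₖ ∘ ℓₗ⁻¹` and `ℓⱼ⁻¹ ∘ ℓᵢ = ℓₗ⁻¹ ∘ ℓₖ` as affine maps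
(lines `ℓ(t) = a·t + b` with `a ≠ 0`), and the (distinct) lines `ℓᵢ, ℓⱼ`
intersect at `(u, v)`, then `ℓₖ` and `ℓₗ` also pass through `(u, v)`;
in particular all four lines are concurrent. -/
theorem stmt_2 (ai bi aj bj ak bk al bl u v : ℝ)
    (hai : ai ≠ 0) (haj : aj ≠ 0) (hak : ak ≠ 0) (hal : al ≠ 0)
    (hij : (ai, bi) ≠ (aj, bj))
    (h1 : ∀ t : ℝ, ai * ((t - bj) / aj) + bi = ak * ((t - bl) / al) + bk)
    (h2 : ∀ t : ℝ, (ai * t + bi - bj) / aj = (ak * t + bk - bl) / al)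
    (hu : v = ai * u + bi) (hv : v = aj * u + bj) :
    v = ak * u + bk ∧ v = al * u + bl := by
  have e1 := h1 0
  have e2 := h1 1
  have e3 := h2 0
  field_simp at e1 e2 e3
  have hA : ai * al = ak * aj := by linarith
  have hne : ai ≠ aj := by
    intro h
    apply hij
    have : bi = bj := by
      have := hu.symm.trans hv
      rw [h] at this; linarith
    rw [h, this]
  have hD : (ai - aj) * u = bj - bi := by nlinarith [hu, hv]
  have hmul : (ai - aj) * al ≠ 0 := mul_ne_zero (sub_ne_zero.mpr hne) hal
  have g1 : (ai - aj) * al * ((ai - ak) * u + bi - bk) = 0 := by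
    linear_combination (ai - ak) * al * hD + ak * e3 - bk * hA - e1
  have g2 : (ai - aj) * al * ((ai - al) * u + bi - bl) = 0 := by
    linear_combination (ai - al) * al * hD + al * e3 - e1 - bl * hA
  have k1 : (ai - ak) * u + bi - bk = 0 := by
    rcases mul_eq_zero.mp g1 with h | h
    · exact absurd h hmul
    · exact h
  have k2 : (ai - al) * u + bi - bl = 0 := by
    rcases mul_eq_zero.mp g2 with h | h
    · exact absurd h hmul
    · exact h
  constructor <;> nlinarith [k1, k2, hu]
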